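/- Let T, T' be finite sets of characters with |T'| ≤ |T| = t, and let a : Ĝ → ℂ, f'' : Ĝ → ℂ. Suppose (i) for all χ ∈ T' ∪ {χ ∈ T : |a_χ| > 2E/t} we have |f''(χ) − a_χ| ≤ √2·E/t; (ii) T' consists of t characters maximizing |f''| among a set containing all χ with |a_χ| > 2E/t (or T' smaller only if no others have f'' ≠ 0); (iii) Σ_{χ ∉ T} |a_χ| ≤ E. Define f'(χ) = f''(χ) for χ ∈ T' and 0 otherwise. Then Σ_χ |a_χ − f'(χ)| ≤ (1 + 3√2) E. -/

import Mathlib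

/-- final approximation estimate of Theorem 4: `a` is the true Fourier
coefficient vector, `T` (of size `t`) supports a best `t`-sparse approximation with tail
`Σ_{χ ∉ T} |a_χ| ≤ E`, `f''` are the median estimates with
`|f''(χ) − a_χ| ≤ √2·E/t` on `T'` and on the large coefficients of `T`, and `T'`
(of size at most `t`) picks characters maximizing `|f''|`, with `|T'| = t` unless all
remaining values of `f''` vanish. Then the `t`-sparse output `f' = f''·𝟙_{T'}` satisfies
`Σ_χ |a_χ − f'(χ)| ≤ (1 + 3√2)·E`. -/
theorem stmt17 {ι : Type*} [Fintype ι] [DecidableEq ι] (t : ℕ) (ht : 1 ≤ t)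
    (E : ℝ) (hE : 0 ≤ E)
    (T T' : Finset ι) (hT : T.card = t) (hT' : T'.card ≤ t)
    (a f'' : ι → ℂ)
    (hclose : ∀ χ, (χ ∈ T' ∨ (χ ∈ T ∧ 2 * E / t < ‖a χ‖)) →
      ‖f'' χ - a χ‖ ≤ Real.sqrt 2 * E / t)
    (hsel : ∀ χ ∈ T', ∀ χ' ∉ T', ‖f'' χ'‖ ≤ ‖f'' χ‖)
    (hfull : T'.card = t ∨ ∀ χ ∉ T', f'' χ = 0) :
    (∑ χ ∈ Finset.univ \ T, ‖a χ‖) ≤ E →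
      ∑ χ, ‖a χ - (if χ ∈ T' then f'' χ else 0)‖ ≤ (1 + 3 * Real.sqrt 2) * E := by
  intro htail
  have htpos : (0:ℝ) < t := by exact_mod_cast Nat.lt_of_lt_of_le Nat.zero_lt_one ht
  have hs1 : (1:ℝ) ≤ Real.sqrt 2 := by
    nlinarith [Real.sq_sqrt (by norm_num : (0:ℝ) ≤ 2), Real.sqrt_nonneg 2]
  have hs2 : Real.sqrt 2 ≤ 2 := by
    nlinarith [Real.sq_sqrt (by norm_num : (0:ℝ) ≤ 2), Real.sqrt_nonneg 2]
  -- bound on T' \ T plus complement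
  have hDC : (∑ χ ∈ T' \ T, ‖a χ‖)
      + ∑ χ ∈ Finset.univ \ (T ∪ T'), ‖a χ‖ ≤ E := by
    have hdis : Disjoint (T' \ T) (Finset.univ \ (T ∪ T')) := by
      rw [Finset.disjoint_left]
      intro x hx hx'
      simp only [Finset.mem_sdiff, Finset.mem_union] at hx hx'
      tauto
    rw [← Finset.sum_union hdis]
    refine le_trans (Finset.sum_le_sum_of_subset_of_nonneg ?_ ?_) htail
    · intro x hx
      simp only [Finset.mem_union, Finset.mem_sdiff, Finset.mem_union, Finset.mem_univ,
        true_and] at hx ⊢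
      tauto
    · intro x _ _; exact norm_nonneg _
  -- bound on T'
  have hA : ∑ χ ∈ T', ‖a χ - f'' χ‖ ≤ Real.sqrt 2 * E := by
    calc ∑ χ ∈ T', ‖a χ - f'' χ‖
        ≤ ∑ _χ ∈ T', Real.sqrt 2 * E / t := by
          refine Finset.sum_le_sum fun χ hχ => ?_
          rw [← norm_sub_rev (f'' χ)]
          exact hclose χ (Or.inl hχ)
      _ = T'.card * (Real.sqrt 2 * E / t) := by rw [Finset.sum_const, nsmul_eq_mul]
      _ ≤ t * (Real.sqrt 2 * E / t) := by
          have : (0:ℝ) ≤ Real.sqrt 2 * E / t := by positivity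
          exact mul_le_mul_of_nonneg_right (by exact_mod_cast hT') this
      _ = Real.sqrt 2 * E := by field_simp
  -- bound on T \ T'
  have hB : ∑ χ ∈ T \ T', ‖a χ‖
      ≤ (∑ χ ∈ T' \ T, ‖a χ‖) + 2 * Real.sqrt 2 * E := by
    rcases hfull with hfc | hzero
    · have hcard : (T \ T').card = (T' \ T).card :=
        Finset.card_sdiff_comm (by rw [hT, hfc])
      have e := Finset.equivOfCardEq hcard
      have hpt : ∀ x : (T \ T' : Finset ι),
          ‖a x‖ ≤ ‖a (e x)‖ + 2 * Real.sqrt 2 * E / t := by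
        rintro ⟨x, hx⟩
        obtain ⟨hxT, hxT'⟩ := Finset.mem_sdiff.mp hx
        set y := e ⟨x, hx⟩ with hy
        have hyT' : (y : ι) ∈ T' := (Finset.mem_sdiff.mp y.2).1
        have hay : (0:ℝ) ≤ ‖a y‖ := norm_nonneg _
        by_cases hbig : 2 * E / t < ‖a x‖
        · have h1 := hclose x (Or.inr ⟨hxT, hbig⟩)
          have h2 := hclose y (Or.inl hyT')
          have h3 := hsel y hyT' x hxT'
          have h4 : ‖a x‖ - ‖f'' x‖ ≤ ‖a x - f'' x‖ :=
            le_trans (le_abs_self _) (abs_norm_sub_norm_le _ _)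
          have h5 : ‖f'' y‖ - ‖a y‖ ≤ ‖f'' y - a y‖ :=
            le_trans (le_abs_self _) (abs_norm_sub_norm_le _ _)
          have h6 : ‖a x - f'' x‖ = ‖f'' x - a x‖ :=
            norm_sub_rev _ _
          have h7 : 2 * Real.sqrt 2 * E / (t:ℝ)
              = Real.sqrt 2 * E / t + Real.sqrt 2 * E / t := by ring
          linarith
        · push_neg at hbig
          have : 2 * E / t ≤ 2 * Real.sqrt 2 * E / t := by
            gcongr (?_) / (t:ℝ)
            nlinarith
          linarith
      calc ∑ χ ∈ T \ T', ‖a χ‖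
          = ∑ x : (T \ T' : Finset ι), ‖a x‖ := (Finset.sum_coe_sort _ _).symm
        _ ≤ ∑ x : (T \ T' : Finset ι), (‖a (e x)‖ + 2 * Real.sqrt 2 * E / t) :=
            Finset.sum_le_sum fun x _ => hpt x
        _ = (∑ y : (T' \ T : Finset ι), ‖a y‖)
            + (T \ T').card * (2 * Real.sqrt 2 * E / t) := by
            rw [Finset.sum_add_distrib, Finset.sum_const, nsmul_eq_mul,
              Equiv.sum_comp e (fun y : (T' \ T : Finset ι) => ‖a y‖),
              Finset.card_univ, Fintype.card_coe]
        _ ≤ (∑ χ ∈ T' \ T, ‖a χ‖) + t * (2 * Real.sqrt 2 * E / t) := by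
            rw [Finset.sum_coe_sort (T' \ T) (fun χ => ‖a χ‖)]
            have hc : (T \ T').card ≤ t := hT ▸ Finset.card_le_card (Finset.sdiff_subset)
            have : (0:ℝ) ≤ 2 * Real.sqrt 2 * E / t := by positivity
            have hc' : ((T \ T').card : ℝ) ≤ (t:ℝ) := by exact_mod_cast hc
            gcongr
        _ = (∑ χ ∈ T' \ T, ‖a χ‖) + 2 * Real.sqrt 2 * E := by
            rw [mul_comm ((t:ℝ)) _, div_mul_cancel₀]
            positivity
    · have hall : ∀ x ∈ T \ T', ‖a x‖ ≤ 2 * E / t := by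
        intro x hx
        obtain ⟨hxT, hxT'⟩ := Finset.mem_sdiff.mp hx
        by_contra hbig
        push_neg at hbig
        have h1 := hclose x (Or.inr ⟨hxT, hbig⟩)
        rw [hzero x hxT', zero_sub, norm_neg] at h1
        have h2 : Real.sqrt 2 * E / t ≤ 2 * E / t := by
          gcongr (?_) / (t:ℝ)
          nlinarith
        linarith
      have hpos : (0:ℝ) ≤ ∑ χ ∈ T' \ T, ‖a χ‖ :=
        Finset.sum_nonneg fun _ _ => norm_nonneg _
      calc ∑ χ ∈ T \ T', ‖a χ‖
          ≤ ∑ _x ∈ T \ T', 2 * E / t := Finset.sum_le_sum hall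
        _ = (T \ T').card * (2 * E / t) := by rw [Finset.sum_const, nsmul_eq_mul]
        _ ≤ t * (2 * E / t) := by
            have hc : (T \ T').card ≤ t := hT ▸ Finset.card_le_card (Finset.sdiff_subset)
            have : (0:ℝ) ≤ 2 * E / t := by positivity
            exact mul_le_mul_of_nonneg_right (by exact_mod_cast hc) this
        _ = 2 * E := by field_simp
        _ ≤ (∑ χ ∈ T' \ T, ‖a χ‖) + 2 * Real.sqrt 2 * E := by nlinarith
  -- assemble
  have hsplit : ∑ χ, ‖a χ - (if χ ∈ T' then f'' χ else 0)‖
      = (∑ χ ∈ Finset.univ \ T', ‖a χ‖) + ∑ χ ∈ T', ‖a χ - f'' χ‖ := by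
    rw [← Finset.sum_sdiff (Finset.subset_univ T')]
    congr 1
    · refine Finset.sum_congr rfl fun χ hχ => ?_
      rw [if_neg (Finset.mem_sdiff.mp hχ).2, sub_zero]
    · refine Finset.sum_congr rfl fun χ hχ => by rw [if_pos hχ]
  have hsplit2 : (∑ χ ∈ Finset.univ \ T', ‖a χ‖)
      = (∑ χ ∈ T \ T', ‖a χ‖) + ∑ χ ∈ Finset.univ \ (T ∪ T'), ‖a χ‖ := by
    rw [← Finset.sum_union]
    · congr 1
      ext χ
      simp only [Finset.mem_sdiff, Finset.mem_union, Finset.mem_univ, true_and]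
      tauto
    · rw [Finset.disjoint_left]
      intro x hx hx'
      simp only [Finset.mem_sdiff, Finset.mem_union] at hx hx'
      tauto
  rw [hsplit, hsplit2]
  nlinarith [hE, hs1]
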